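/- For all indices i,k∈{1,2,3} and every x∈ℝ², the second directional derivative of φ_i along the edge tangent t_k satisfies ∂²_{t_k}φ_i(x) = −2δ_{ki}/ℓ_k², i.e., the second derivative of the map s ↦ φ_i(x + s·t_k) equals −2/ℓ_k² when i=k and equals 0 when i≠k. -/

import Mathlib

lemma deriv2_quadratic (a b c : ℝ) (s : ℝ) :
    iteratedDeriv 2 (fun s : ℝ => a * s ^ 2 + b * s + c) s = 2 * a := by
  have hd : deriv (fun s : ℝ => a * s ^ 2 + b * s + c) = fun u : ℝ => 2 * a * u + b := by
    funext u
    have h : HasDerivAt (fun s : ℝ => a * s ^ 2 + b * s + c) (2 * a * u + b) u := by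
      have h' := (((hasDerivAt_pow 2 u).const_mul a).add
        (((hasDerivAt_id u).const_mul b).add_const c))
      exact (h'.congr_deriv (show _ = 2 * a * u + b by rw [show (2:ℕ) - 1 = 1 from rfl]; push_cast; ring)).congr_of_eventuallyEq (Filter.Eventually.of_forall fun v => by simp [add_assoc])
    exact h.deriv
  have hd2 : deriv (fun u : ℝ => 2 * a * u + b) s = 2 * a := by
    have h : HasDerivAt (fun u : ℝ => 2 * a * u + b) (2 * a) s := by
      simpa using ((hasDerivAt_id s).const_mul (2 * a)).add_const b
    exact h.deriv
  rw [show (2 : ℕ) = 1 + 1 from rfl, iteratedDeriv_succ, iteratedDeriv_one, hd, hd2]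

/-- In a nondegenerate triangle with vertices `p₁, p₂, p₃` (indices mod 3),
with barycentric coordinates `λ_k`, quadratic bubbles `φ_k = λ_{k−1} λ_{k+1}`,
unit tangents `t_k` parallel to the edge `e_k` joining `p_{k−1}` and `p_{k+1}`,
and edge lengths `ℓ_k`, the second directional derivative of `φ_i` along `t_k`
satisfies `∂²_{t_k} φ_i = −2 δ_{ki} / ℓ_k²` at every point. -/
theorem bubble_second_tangential_derivative
    (p : ZMod 3 → Fin 2 → ℝ) (hp : AffineIndependent ℝ p)
    (lam : ZMod 3 → (Fin 2 → ℝ) → ℝ)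
    (hlam_aff : ∀ k, ∃ a b c : ℝ, ∀ x, lam k x = a * x 0 + b * x 1 + c)
    (hlam_val : ∀ k j, lam k (p j) = if k = j then 1 else 0)
    (t : ZMod 3 → Fin 2 → ℝ)
    (ht_unit : ∀ k, (t k 0) ^ 2 + (t k 1) ^ 2 = 1)
    (ht_par : ∀ k, ∃ c : ℝ, (fun j => p (k + 1) j - p (k - 1) j) = c • t k)
    (L : ZMod 3 → ℝ)
    (hL : ∀ k, L k =
      Real.sqrt ((p (k + 1) 0 - p (k - 1) 0) ^ 2 + (p (k + 1) 1 - p (k - 1) 1) ^ 2))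
    (i k : ZMod 3) (x : Fin 2 → ℝ) (s : ℝ) :
    iteratedDeriv 2
        (fun s : ℝ => lam (i - 1) (x + s • t k) * lam (i + 1) (x + s • t k)) s
      = -2 * (if k = i then 1 else 0) / (L k) ^ 2 := by
  obtain ⟨a1, b1, c1, h1⟩ := hlam_aff (i - 1)
  obtain ⟨a2, b2, c2, h2⟩ := hlam_aff (i + 1)
  obtain ⟨c, hc⟩ := ht_par k
  have hd0 : p (k + 1) 0 - p (k - 1) 0 = c * t k 0 := by
    have := congrFun hc 0; simpa using this
  have hd1 : p (k + 1) 1 - p (k - 1) 1 = c * t k 1 := by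
    have := congrFun hc 1; simpa using this
  set D1 : ℝ := a1 * t k 0 + b1 * t k 1 with hD1
  set D2 : ℝ := a2 * t k 0 + b2 * t k 1 with hD2
  set A1 : ℝ := a1 * x 0 + b1 * x 1 + c1 with hA1
  set A2 : ℝ := a2 * x 0 + b2 * x 1 + c2 with hA2
  have key : (fun s : ℝ => lam (i - 1) (x + s • t k) * lam (i + 1) (x + s • t k))
      = fun s : ℝ => (D1 * D2) * s ^ 2 + (A1 * D2 + D1 * A2) * s + A1 * A2 := by
    funext u
    simp only [h1, h2, Pi.add_apply, Pi.smul_apply, smul_eq_mul, hD1, hD2, hA1, hA2]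
    ring
  rw [key, deriv2_quadratic]
  -- difference identities
  have hdiff1 : c * D1 = lam (i - 1) (p (k + 1)) - lam (i - 1) (p (k - 1)) := by
    rw [h1, h1, hD1]; linear_combination -a1 * hd0 - b1 * hd1
  have hdiff2 : c * D2 = lam (i + 1) (p (k + 1)) - lam (i + 1) (p (k - 1)) := by
    rw [h2, h2, hD2]; linear_combination -a2 * hd0 - b2 * hd1
  -- c ≠ 0
  have hne : (k + 1 : ZMod 3) ≠ k - 1 := by
    have : ∀ m : ZMod 3, m + 1 ≠ m - 1 := by decide
    exact this k
  have hc0 : c ≠ 0 := by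
    intro h
    apply hne
    apply hp.injective
    funext j
    have := congrFun hc j
    simp only [h, zero_smul, Pi.zero_apply] at this
    linarith [this]
  -- L k ^ 2 = c ^ 2
  have hL2 : (L k) ^ 2 = c ^ 2 := by
    rw [hL k, hd0, hd1]
    rw [show (c * t k 0) ^ 2 + (c * t k 1) ^ 2 = c ^ 2 * ((t k 0) ^ 2 + (t k 1) ^ 2) by ring,
      ht_unit k, mul_one]
    exact Real.sq_sqrt (sq_nonneg c)
  by_cases hik : k = i
  · subst hik
    have e1 : lam (k - 1) (p (k + 1)) = 0 := by
      rw [hlam_val]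
      exact if_neg fun h => hne h.symm
    have e2 : lam (k - 1) (p (k - 1)) = 1 := by rw [hlam_val]; simp
    have e3 : lam (k + 1) (p (k + 1)) = 1 := by rw [hlam_val]; simp
    have e4 : lam (k + 1) (p (k - 1)) = 0 := by
      rw [hlam_val]
      exact if_neg hne
    rw [e1, e2] at hdiff1
    rw [e3, e4] at hdiff2
    rw [if_pos rfl]
    rw [hL2]
    field_simp
    nlinarith [hdiff1, hdiff2]
  · have hcase : k = i + 1 ∨ k = i + 2 := by
      have : ∀ i k : ZMod 3, k ≠ i → (k = i + 1 ∨ k = i + 2) := by decide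
      exact this i k hik
    have hzero : D1 * D2 = 0 := by
      rcases hcase with h | h
      · -- i + 1 = k, so D2 corresponds to lam k
        have hik1 : i + 1 = k := h.symm
        have e3 : lam (i + 1) (p (k + 1)) = 0 := by
          rw [hlam_val]
          refine if_neg fun hh => ?_
          rw [hik1] at hh
          exact (by decide : ∀ m : ZMod 3, m ≠ m + 1) k hh
        have e4 : lam (i + 1) (p (k - 1)) = 0 := by
          rw [hlam_val]
          refine if_neg fun hh => ?_
          rw [hik1] at hh
          exact (by decide : ∀ m : ZMod 3, m ≠ m - 1) k hh
        have : c * D2 = 0 := by rw [hdiff2, e3, e4]; ring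
        have : D2 = 0 := by
          rcases mul_eq_zero.mp this with h' | h'
          · exact absurd h' hc0
          · exact h'
        rw [this, mul_zero]
      · -- i - 1 = k
        have hik1 : i - 1 = k := by
          rw [h]; exact (by decide : ∀ m : ZMod 3, m - 1 = m + 2) i
        have e1 : lam (i - 1) (p (k + 1)) = 0 := by
          rw [hlam_val]
          refine if_neg fun hh => ?_
          rw [hik1] at hh
          exact (by decide : ∀ m : ZMod 3, m ≠ m + 1) k hh
        have e2 : lam (i - 1) (p (k - 1)) = 0 := by
          rw [hlam_val]
          refine if_neg fun hh => ?_
          rw [hik1] at hh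
          exact (by decide : ∀ m : ZMod 3, m ≠ m - 1) k hh
        have : c * D1 = 0 := by rw [hdiff1, e1, e2]; ring
        have : D1 = 0 := by
          rcases mul_eq_zero.mp this with h' | h'
          · exact absurd h' hc0
          · exact h'
        rw [this, zero_mul]
    rw [hzero, if_neg hik]
    simp
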